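/- arXiv:2501.16032 — 3 statements merged into one kernel-verified Lean document; each statement's English description precedes it below -/
import Mathlib

section
/- Let n ≥ 2, n ≡ 2 or 3 mod 4. On the hyperplane V = {x ∈ ℝ^{n+2} : Σ_k x_k = 0}, the polynomial Ṽ(x) = (Σ_k x_k³)·V(x), where V is the Vandermonde polynomial, satisfies Δ_{ℝ^{n+2}} Ṽ(x) = Hess Ṽ(N,N)(x) for all x ∈ V, where N = (1,...,1); in particular its restriction to V is harmonic for the induced metric. -/
open MvPolynomial

open Equiv Finset

/-- The Vandermonde polynomial in `N` variables. -/
noncomputable def vandermondePoly (N : ℕ) : MvPolynomial (Fin N) ℝ :=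
  ∏ p ∈ Finset.univ.filter (fun p : Fin N × Fin N => p.1 < p.2), (X p.1 - X p.2)

/-- `Ṽ = (∑ x_k³) · V`, with `V` the Vandermonde polynomial. -/
noncomputable def vandermondeTilde (N : ℕ) : MvPolynomial (Fin N) ℝ :=
  (∑ k : Fin N, X k ^ 3) * vandermondePoly N

namespace VandAux

variable {N : ℕ}

noncomputable def eσ (σ : Equiv.Perm (Fin N)) : Fin N →₀ ℕ :=
  Finsupp.equivFunOnFinite.symm fun j => (σ j : ℕ)

lemma eσ_apply (σ : Equiv.Perm (Fin N)) (k : Fin N) : eσ σ k = (σ k : ℕ) := rfl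

noncomputable def mono (σ : Equiv.Perm (Fin N)) : MvPolynomial (Fin N) ℝ :=
  monomial (eσ σ) (((Equiv.Perm.sign σ : ℤ) : ℝ))

def pairg (b : ℕ → ℕ) (cond : ℕ → Prop) [DecidablePred cond]
    (p : Equiv.Perm (Fin N) × Fin N) : Equiv.Perm (Fin N) × Fin N :=
  if cond ((p.1 p.2 : ℕ)) then
    (p.1 * Equiv.swap p.2 (p.1⁻¹ ⟨b ((p.1 p.2 : ℕ)) % N, Nat.mod_lt _ p.2.pos⟩),
     p.1⁻¹ ⟨b ((p.1 p.2 : ℕ)) % N, Nat.mod_lt _ p.2.pos⟩)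
  else p

/-- generic sign-reversing involution cancellation -/
lemma sum_cancel (b : ℕ → ℕ) (cond : ℕ → Prop) [DecidablePred cond]
    (E : (Fin N →₀ ℕ) → Fin N → (Fin N →₀ ℕ)) (w : ℕ → ℝ)
    (hb : ∀ a, a < N → cond a → b a < N ∧ b a ≠ a)
    (hw : ∀ a, a < N → ¬ cond a → w a = 0)
    (hE : ∀ (σ : Equiv.Perm (Fin N)) (k m : Fin N), k ≠ m → ((σ m : ℕ) = b (σ k : ℕ)) →
        E (eσ (σ * Equiv.swap k m)) m = E (eσ σ) k) :
    ∑ p : Equiv.Perm (Fin N) × Fin N,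
      (monomial (E (eσ p.1) p.2)
        (((Equiv.Perm.sign p.1 : ℤ) : ℝ) * w ((p.1 p.2 : ℕ)))) = 0 := by
  -- basic facts in the active case
  have key : ∀ (σ : Equiv.Perm (Fin N)) (k : Fin N), cond ((σ k : ℕ)) →
      ∃ m : Fin N, pairg b cond (σ, k) = (σ * Equiv.swap k m, m) ∧
        ((σ m : ℕ) = b ((σ k : ℕ))) ∧ k ≠ m := by
    intro σ k hc
    obtain ⟨hb1, hb2⟩ := hb _ (σ k).isLt hc
    refine ⟨σ⁻¹ ⟨b ((σ k : ℕ)) % N, Nat.mod_lt _ k.pos⟩, ?_, ?_, ?_⟩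
    · simp only [pairg]; rw [if_pos hc]
    · rw [show ∀ y, σ (σ⁻¹ y) = y from Equiv.apply_symm_apply σ]; exact Nat.mod_eq_of_lt hb1
    · intro h
      apply hb2
      conv_rhs => rw [h]
      rw [show ∀ y, σ (σ⁻¹ y) = y from Equiv.apply_symm_apply σ]
      exact (Nat.mod_eq_of_lt hb1).symm
  apply Finset.sum_ninvolution (g := pairg b cond)
  · -- f p + f (g p) = 0
    rintro ⟨σ, k⟩
    by_cases hc : cond ((σ k : ℕ))
    · obtain ⟨m, hg, hσm, hkm⟩ := key σ k hc
      rw [hg]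
      have hτm : (σ * Equiv.swap k m) m = σ k := by
        simp [Equiv.Perm.mul_apply, Equiv.swap_apply_right]
      have hsign : ((Equiv.Perm.sign (σ * Equiv.swap k m) : ℤ) : ℝ)
          = -((Equiv.Perm.sign σ : ℤ) : ℝ) := by
        rw [Equiv.Perm.sign_mul, Equiv.Perm.sign_swap hkm]
        push_cast; ring
      simp only
      rw [hE σ k m hkm hσm, hτm, hsign, ← map_add,
        show (((Equiv.Perm.sign σ : ℤ) : ℝ)) * w ((σ k : ℕ))
          + (-((Equiv.Perm.sign σ : ℤ) : ℝ)) * w ((σ k : ℕ)) = 0 by ring, map_zero]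
    · have hg : pairg b cond (σ, k) = (σ, k) := by simp only [pairg]; rw [if_neg hc]
      rw [hg]
      simp only
      rw [hw _ (σ k).isLt hc, mul_zero, map_zero, add_zero]
  · -- f p ≠ 0 → g p ≠ p
    rintro ⟨σ, k⟩ hf
    by_cases hc : cond ((σ k : ℕ))
    · obtain ⟨m, hg, hσm, hkm⟩ := key σ k hc
      rw [hg]
      intro h
      exact hkm (congrArg Prod.snd h).symm
    · exact absurd (by simp only; rw [hw _ (σ k).isLt hc, mul_zero, map_zero]) hf
  · intro p; exact Finset.mem_univ _
  · -- involution
    rintro ⟨σ, k⟩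
    by_cases hc : cond ((σ k : ℕ))
    · obtain ⟨m, hg, hσm, hkm⟩ := key σ k hc
      rw [hg]
      set τ : Equiv.Perm (Fin N) := σ * Equiv.swap k m with hτ
      have hτm : τ m = σ k := by simp [hτ, Equiv.Perm.mul_apply, Equiv.swap_apply_right]
      have hτk : τ k = σ m := by simp [hτ, Equiv.Perm.mul_apply, Equiv.swap_apply_left]
      have hc2 : cond ((τ m : ℕ)) := by rw [hτm]; exact hc
      obtain ⟨m', hg', hτm', hmm'⟩ := key τ m hc2
      rw [hg']
      have hm' : m' = k := by
        have h1 : (τ m' : ℕ) = (τ k : ℕ) := by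
          rw [hτm', hτk, hσm, hτm]
        exact τ.injective (Fin.ext h1)
      rw [hm']
      refine Prod.ext ?_ rfl
      simp only
      rw [hτ, mul_assoc, Equiv.swap_comm m k, Equiv.swap_mul_self, mul_one]
    · have hg : pairg b cond (σ, k) = (σ, k) := by simp only [pairg]; rw [if_neg hc]
      rw [hg, hg]

noncomputable def W (N : ℕ) : MvPolynomial (Fin N) ℝ := ∑ σ : Equiv.Perm (Fin N), mono σ

lemma sum_pd_W : ∑ k : Fin N, pderiv k (W N) = 0 := by
  have h := sum_cancel (N := N) (fun a => a - 1) (fun a => 0 < a)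
    (fun e k => e - Finsupp.single k 1) (fun a => (a : ℝ)) ?_ ?_ ?_
  · calc ∑ k : Fin N, pderiv k (W N)
        = ∑ k : Fin N, ∑ σ : Equiv.Perm (Fin N), pderiv k (mono σ) := by
          simp [W, map_sum]
      _ = ∑ σ : Equiv.Perm (Fin N), ∑ k : Fin N, pderiv k (mono σ) := Finset.sum_comm
      _ = ∑ p : Equiv.Perm (Fin N) × Fin N, pderiv p.2 (mono p.1) :=
          (Fintype.sum_prod_type (fun p : Equiv.Perm (Fin N) × Fin N => pderiv p.2 (mono p.1))).symm
      _ = 0 := by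
          rw [← h]
          refine Finset.sum_congr rfl fun p _ => ?_
          rw [mono, pderiv_monomial]
          rfl
  · intro a _ hc
    exact ⟨by show a - 1 < N; omega, by show a - 1 ≠ a; omega⟩
  · intro a _ hc
    have h0 : a = 0 := by omega
    subst h0
    show ((0:ℕ):ℝ) = 0
    simp
  · intro σ k m hkm hv
    have hv' : (σ m : ℕ) = (σ k : ℕ) - 1 := hv
    have hne : (σ m : ℕ) ≠ (σ k : ℕ) := fun h => hkm (σ.injective (Fin.ext h)).symm
    ext j
    simp only [Finsupp.tsub_apply, Finsupp.single_apply, eσ_apply, Equiv.Perm.mul_apply]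
    by_cases hjk : j = k
    · simp only [hjk, Equiv.swap_apply_left, if_neg (Ne.symm hkm), eq_self_iff_true, if_true]
      omega
    · by_cases hjm : j = m
      · simp only [hjm, Equiv.swap_apply_right, eq_self_iff_true, if_true, if_neg hkm]
        omega
      · simp only [Equiv.swap_apply_of_ne_of_ne hjk hjm, if_neg (Ne.symm hjm),
          if_neg (Ne.symm hjk)]

lemma sum_pd2_W : ∑ k : Fin N, pderiv k (pderiv k (W N)) = 0 := by
  have h := sum_cancel (N := N) (fun a => a - 2) (fun a => 2 ≤ a)
    (fun e k => e - Finsupp.single k 1 - Finsupp.single k 1)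
    (fun a => (a : ℝ) * ((a - 1 : ℕ) : ℝ)) ?_ ?_ ?_
  · calc ∑ k : Fin N, pderiv k (pderiv k (W N))
        = ∑ k : Fin N, ∑ σ : Equiv.Perm (Fin N), pderiv k (pderiv k (mono σ)) := by
          simp [W, map_sum]
      _ = ∑ σ : Equiv.Perm (Fin N), ∑ k : Fin N, pderiv k (pderiv k (mono σ)) :=
          Finset.sum_comm
      _ = ∑ p : Equiv.Perm (Fin N) × Fin N, pderiv p.2 (pderiv p.2 (mono p.1)) :=
          (Fintype.sum_prod_type (fun p : Equiv.Perm (Fin N) × Fin N => pderiv p.2 (pderiv p.2 (mono p.1)))).symm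
      _ = 0 := by
          rw [← h]
          refine Finset.sum_congr rfl fun p _ => ?_
          rw [mono, pderiv_monomial, pderiv_monomial]
          refine congrArg _ ?_
          rw [Finsupp.tsub_apply, Finsupp.single_eq_same, eσ_apply, mul_assoc]
  · intro a _ hc
    exact ⟨by show a - 2 < N; omega, by show a - 2 ≠ a; omega⟩
  · intro a _ hc
    show ((a:ℕ):ℝ) * ((a - 1 : ℕ) : ℝ) = 0
    have h0 : a = 0 ∨ a = 1 := by omega
    rcases h0 with rfl | rfl <;> simp
  · intro σ k m hkm hv
    have hv' : (σ m : ℕ) = (σ k : ℕ) - 2 := hv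
    have hne : (σ m : ℕ) ≠ (σ k : ℕ) := fun h => hkm (σ.injective (Fin.ext h)).symm
    ext j
    simp only [Finsupp.tsub_apply, Finsupp.single_apply, eσ_apply, Equiv.Perm.mul_apply]
    by_cases hjk : j = k
    · simp only [hjk, Equiv.swap_apply_left, if_neg (Ne.symm hkm), eq_self_iff_true, if_true]
      omega
    · by_cases hjm : j = m
      · simp only [hjm, Equiv.swap_apply_right, eq_self_iff_true, if_true, if_neg hkm]
        omega
      · simp only [Equiv.swap_apply_of_ne_of_ne hjk hjm, if_neg (Ne.symm hjm),
          if_neg (Ne.symm hjk)]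

lemma term_D (σ : Equiv.Perm (Fin N)) (k : Fin N) :
    X k ^ 2 * pderiv k (mono σ) - C ((N:ℝ) - 1) * (X k * mono σ)
      = monomial (eσ σ + Finsupp.single k 1)
          (((Equiv.Perm.sign σ : ℤ) : ℝ) * (((σ k : ℕ) : ℝ) - ((N:ℝ) - 1))) := by
  have hX : (X k : MvPolynomial (Fin N) ℝ) = monomial (Finsupp.single k 1) 1 := by
    rw [← pow_one (X k : MvPolynomial (Fin N) ℝ), X_pow_eq_monomial]
  by_cases h0 : (σ k : ℕ) = 0
  · have h1 : pderiv k (mono σ) = 0 := by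
      rw [mono, pderiv_monomial, eσ_apply, h0]
      simp
    have hr : ((σ k : ℕ):ℝ) = 0 := by rw [h0]; exact Nat.cast_zero
    rw [h1, mul_zero, zero_sub, hr, hX, mono, C_apply, monomial_mul, monomial_mul, ← map_neg]
    congr 1
    · rw [zero_add, add_comm]
    · ring
  · rw [mono, pderiv_monomial, eσ_apply, X_pow_eq_monomial, hX, C_apply, monomial_mul,
      monomial_mul, monomial_mul]
    have hA : Finsupp.single k 2 + (eσ σ - Finsupp.single k 1) = eσ σ + Finsupp.single k 1 := by
      ext j
      simp only [Finsupp.add_apply, Finsupp.tsub_apply, Finsupp.single_apply, eσ_apply]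
      by_cases hjk : j = k
      · simp only [hjk, eq_self_iff_true, if_true]
        omega
      · simp only [if_neg (Ne.symm hjk)]
        omega
    have hB : (0 : Fin N →₀ ℕ) + (Finsupp.single k 1 + eσ σ) = eσ σ + Finsupp.single k 1 := by
      rw [zero_add, add_comm]
    rw [hA, hB, ← map_sub]
    congr 1
    ring

lemma sum_D_W : ∑ k : Fin N, X k ^ 2 * pderiv k (W N)
    = C ((N:ℝ) - 1) * ((∑ k : Fin N, X k) * W N) := by
  rw [← sub_eq_zero]
  have h := sum_cancel (N := N) (fun a => a + 1) (fun a => a + 1 < N)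
    (fun e k => e + Finsupp.single k 1) (fun a => ((a:ℕ) : ℝ) - ((N:ℝ) - 1)) ?_ ?_ ?_
  · calc ∑ k : Fin N, X k ^ 2 * pderiv k (W N)
          - C ((N:ℝ) - 1) * ((∑ k : Fin N, X k) * W N)
        = ∑ k : Fin N, ∑ σ : Equiv.Perm (Fin N),
            (X k ^ 2 * pderiv k (mono σ) - C ((N:ℝ) - 1) * (X k * mono σ)) := by
          rw [Finset.sum_mul, Finset.mul_sum, ← Finset.sum_sub_distrib]
          refine Finset.sum_congr rfl fun k _ => ?_
          rw [W, map_sum, Finset.mul_sum, Finset.mul_sum, Finset.mul_sum, ← Finset.sum_sub_distrib]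
      _ = ∑ σ : Equiv.Perm (Fin N), ∑ k : Fin N,
            (X k ^ 2 * pderiv k (mono σ) - C ((N:ℝ) - 1) * (X k * mono σ)) := Finset.sum_comm
      _ = ∑ p : Equiv.Perm (Fin N) × Fin N,
            (X p.2 ^ 2 * pderiv p.2 (mono p.1) - C ((N:ℝ) - 1) * (X p.2 * mono p.1)) :=
          (Fintype.sum_prod_type (fun p : Equiv.Perm (Fin N) × Fin N =>
            X p.2 ^ 2 * pderiv p.2 (mono p.1) - C ((N:ℝ) - 1) * (X p.2 * mono p.1))).symm
      _ = 0 := by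
          rw [← h]
          exact Finset.sum_congr rfl fun p _ => term_D p.1 p.2
  · intro a _ hc
    exact ⟨hc, by show a + 1 ≠ a; omega⟩
  · intro a ha hc
    show ((a:ℕ):ℝ) - ((N:ℝ) - 1) = 0
    have : a + 1 = N := by omega
    have : ((a:ℕ):ℝ) + 1 = (N:ℝ) := by exact_mod_cast congrArg (Nat.cast (R := ℝ)) this
    linarith
  · intro σ k m hkm hv
    have hv' : (σ m : ℕ) = (σ k : ℕ) + 1 := hv
    ext j
    simp only [Finsupp.add_apply, Finsupp.single_apply, eσ_apply, Equiv.Perm.mul_apply]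
    by_cases hjk : j = k
    · simp only [hjk, Equiv.swap_apply_left, if_neg (Ne.symm hkm), eq_self_iff_true, if_true]
      omega
    · by_cases hjm : j = m
      · simp only [hjm, Equiv.swap_apply_right, eq_self_iff_true, if_true, if_neg hkm]
        omega
      · simp only [Equiv.swap_apply_of_ne_of_ne hjk hjm, if_neg (Ne.symm hjm),
          if_neg (Ne.symm hjk)]

lemma prod_X_pow_univ (d : Fin N →₀ ℕ) :
    ∏ j : Fin N, (X j : MvPolynomial (Fin N) ℝ) ^ d j = monomial d 1 := by
  rw [← prod_X_pow_eq_monomial]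
  exact (Finset.prod_subset (Finset.subset_univ _) (by
    intro x _ hx
    rw [Finsupp.notMem_support_iff.mp hx, pow_zero])).symm

lemma det_eq_W :
    (Matrix.vandermonde (fun i : Fin N => (X i : MvPolynomial (Fin N) ℝ))).det = W N := by
  rw [Matrix.det_apply]
  have step : ∀ σ : Equiv.Perm (Fin N),
      Equiv.Perm.sign σ • ∏ i : Fin N,
        Matrix.vandermonde (fun i : Fin N => (X i : MvPolynomial (Fin N) ℝ)) (σ i) i
      = mono σ⁻¹ := by
    intro σ
    have h1 : ∏ i : Fin N,
        Matrix.vandermonde (fun i : Fin N => (X i : MvPolynomial (Fin N) ℝ)) (σ i) i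
        = ∏ j : Fin N, (X j : MvPolynomial (Fin N) ℝ) ^ ((eσ σ⁻¹) j) := by
      rw [← Equiv.prod_comp σ (fun j => (X j : MvPolynomial (Fin N) ℝ) ^ ((eσ σ⁻¹) j))]
      refine Finset.prod_congr rfl fun i _ => ?_
      rw [Matrix.vandermonde_apply, eσ_apply, show σ⁻¹ (σ i) = i from Equiv.symm_apply_apply σ i]
    rw [h1, prod_X_pow_univ, mono, Equiv.Perm.sign_inv, Units.smul_def, smul_monomial,
      zsmul_eq_mul, mul_one]
  rw [Finset.sum_congr rfl fun σ _ => step σ]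
  rw [W]
  refine Finset.sum_nbij' (fun σ => σ⁻¹) (fun σ => σ⁻¹) (fun _ _ => Finset.mem_univ _)
    (fun _ _ => Finset.mem_univ _) (fun σ _ => inv_inv σ) (fun σ _ => inv_inv σ)
    (fun σ _ => rfl)

lemma vand_eq_W :
    vandermondePoly N
      = C (((-1:ℝ)) ^ (Finset.univ.filter (fun p : Fin N × Fin N => p.1 < p.2)).card)
        * W N := by
  set P := Finset.univ.filter (fun p : Fin N × Fin N => p.1 < p.2) with hP
  have h3 : ∏ i : Fin N, ∏ j ∈ Finset.Ioi i, ((X j : MvPolynomial (Fin N) ℝ) - X i)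
      = ∏ p ∈ P, ((X p.2 : MvPolynomial (Fin N) ℝ) - X p.1) := by
    rw [Finset.prod_sigma' Finset.univ (fun i => Finset.Ioi i)
      (fun i j => ((X j : MvPolynomial (Fin N) ℝ) - X i))]
    refine Finset.prod_nbij' (fun x => (x.1, x.2)) (fun p => ⟨p.1, p.2⟩) ?_ ?_ ?_ ?_ ?_
    · intro a ha
      simp only [hP, Finset.mem_filter, Finset.mem_univ, true_and]
      simp only [Finset.mem_sigma, Finset.mem_Ioi] at ha
      exact ha.2
    · intro a ha
      simp only [hP, Finset.mem_filter, Finset.mem_univ, true_and] at ha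
      simp only [Finset.mem_sigma, Finset.mem_Ioi, Finset.mem_univ, true_and]
      exact ha
    · intro a _; rfl
    · intro a _; rfl
    · intro a _; rfl
  have h4 : W N = C (((-1:ℝ)) ^ P.card) * vandermondePoly N := by
    rw [← det_eq_W, Matrix.det_vandermonde, h3, vandermondePoly]
    rw [Finset.prod_congr rfl (fun (p : Fin N × Fin N) (_ : p ∈ P) =>
      (show ((X p.2 : MvPolynomial (Fin N) ℝ) - X p.1)
        = (-1 : MvPolynomial (Fin N) ℝ) * (X p.1 - X p.2) by ring))]
    rw [Finset.prod_mul_distrib, Finset.prod_const]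
    congr 1
    rw [show ((-1 : MvPolynomial (Fin N) ℝ)) = C (-1) by simp, ← C_pow]
  rw [h4, ← mul_assoc, ← C_mul, ← pow_add]
  rw [show ((-1:ℝ)) ^ (P.card + P.card) = 1 from Even.neg_one_pow ⟨P.card, rfl⟩, C_1, one_mul]

lemma L_V : ∑ k : Fin N, pderiv k (vandermondePoly N) = 0 := by
  rw [vand_eq_W]
  simp only [pderiv_C_mul]
  rw [← Finset.mul_sum, sum_pd_W, mul_zero]

lemma D2_V : ∑ k : Fin N, pderiv k (pderiv k (vandermondePoly N)) = 0 := by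
  rw [vand_eq_W]
  simp only [pderiv_C_mul]
  rw [← Finset.mul_sum, sum_pd2_W, mul_zero]

lemma D_V : ∑ k : Fin N, X k ^ 2 * pderiv k (vandermondePoly N)
    = C ((N:ℝ) - 1) * ((∑ k : Fin N, X k) * vandermondePoly N) := by
  rw [vand_eq_W]
  simp only [pderiv_C_mul]
  calc ∑ k : Fin N, X k ^ 2
        * (C (((-1:ℝ)) ^ (Finset.univ.filter (fun p : Fin N × Fin N => p.1 < p.2)).card)
          * pderiv k (W N))
      = C (((-1:ℝ)) ^ (Finset.univ.filter (fun p : Fin N × Fin N => p.1 < p.2)).card)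
        * ∑ k : Fin N, X k ^ 2 * pderiv k (W N) := by
        rw [Finset.mul_sum]
        exact Finset.sum_congr rfl fun k _ => by ring
    _ = _ := by
        rw [sum_D_W]
        ring

lemma pd_S (k : Fin N) :
    pderiv k (∑ i : Fin N, (X i : MvPolynomial (Fin N) ℝ) ^ 3) = C 3 * X k ^ 2 := by
  rw [map_sum, Finset.sum_eq_single k]
  · rw [pderiv_pow, pderiv_X_self, mul_one]
    norm_num
    exact (map_ofNat C 3).symm
  · intro i _ hik
    rw [pderiv_pow, pderiv_X_of_ne hik, mul_zero]
  · intro h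
    exact absurd (Finset.mem_univ k) h

lemma pd_p2 (k : Fin N) :
    pderiv k (∑ i : Fin N, (X i : MvPolynomial (Fin N) ℝ) ^ 2) = C 2 * X k := by
  rw [map_sum, Finset.sum_eq_single k]
  · rw [pderiv_pow, pderiv_X_self, mul_one, pow_one]
    norm_num
    exact (map_ofNat C 2).symm
  · intro i _ hik
    rw [pderiv_pow, pderiv_X_of_ne hik, mul_zero]
  · intro h
    exact absurd (Finset.mem_univ k) h

lemma pd2_tilde (k : Fin N) :
    pderiv k (pderiv k (vandermondeTilde N)) =
      C 6 * (X k * vandermondePoly N) + C 6 * (X k ^ 2 * pderiv k (vandermondePoly N))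
      + (∑ i : Fin N, X i ^ 3) * pderiv k (pderiv k (vandermondePoly N)) := by
  have h1 : pderiv k ((C 3 : MvPolynomial (Fin N) ℝ) * X k ^ 2) = C 6 * X k := by
    rw [pderiv_C_mul, pderiv_pow, pderiv_X_self, mul_one, pow_one, ← mul_assoc]
    congr 1
    rw [show ((2:ℕ) : MvPolynomial (Fin N) ℝ) = C 2 from (map_ofNat C 2).symm, ← C_mul]
    norm_num
  rw [vandermondeTilde, pderiv_mul, pd_S, map_add, pderiv_mul, h1, pderiv_mul, pd_S]
  rw [show (C 6 : MvPolynomial (Fin N) ℝ) = 2 * C 3 from by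
    rw [show (2 : MvPolynomial (Fin N) ℝ) = C 2 from (map_ofNat C 2).symm, ← C_mul]
    norm_num]
  ring

lemma sum_pd2_tilde :
    ∑ k : Fin N, pderiv k (pderiv k (vandermondeTilde N))
      = C 6 * ((∑ k : Fin N, X k) * vandermondePoly N)
        + C 6 * (C ((N:ℝ) - 1) * ((∑ k : Fin N, X k) * vandermondePoly N)) := by
  rw [Finset.sum_congr rfl fun k _ => pd2_tilde k]
  rw [Finset.sum_add_distrib, Finset.sum_add_distrib]
  have hA : ∑ k : Fin N, C 6 * (X k * vandermondePoly N)
      = (C 6 : MvPolynomial (Fin N) ℝ) * ((∑ k : Fin N, X k) * vandermondePoly N) := by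
    rw [Finset.sum_mul, Finset.mul_sum]
  have hB : ∑ k : Fin N, C 6 * (X k ^ 2 * pderiv k (vandermondePoly N))
      = (C 6 : MvPolynomial (Fin N) ℝ)
        * (C ((N:ℝ) - 1) * ((∑ k : Fin N, X k) * vandermondePoly N)) := by
    rw [← Finset.mul_sum, D_V]
  have hC : ∑ k : Fin N, (∑ i : Fin N, (X i : MvPolynomial (Fin N) ℝ) ^ 3)
        * pderiv k (pderiv k (vandermondePoly N)) = 0 := by
    rw [← Finset.mul_sum, D2_V, mul_zero]
  rw [hA, hB, hC, add_zero]

lemma sum_hess_tilde :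
    ∑ i : Fin N, ∑ j : Fin N, pderiv i (pderiv j (vandermondeTilde N))
      = C 6 * ((∑ k : Fin N, X k) * vandermondePoly N) := by
  have h0 : ∑ j : Fin N, pderiv j (vandermondeTilde N)
      = C 3 * ((∑ i : Fin N, X i ^ 2) * vandermondePoly N) := by
    rw [vandermondeTilde]
    rw [Finset.sum_congr rfl fun j (_ : j ∈ Finset.univ) => (pderiv_mul (i := j))]
    rw [Finset.sum_add_distrib]
    have h1 : ∑ j : Fin N, pderiv j (∑ k : Fin N, (X k : MvPolynomial (Fin N) ℝ) ^ 3)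
          * vandermondePoly N
        = C 3 * ((∑ i : Fin N, X i ^ 2) * vandermondePoly N) := by
      rw [Finset.sum_congr rfl fun j _ => by rw [pd_S]]
      rw [Finset.sum_mul, Finset.mul_sum]
      exact Finset.sum_congr rfl fun k _ => by ring
    have h2 : ∑ j : Fin N, (∑ k : Fin N, (X k : MvPolynomial (Fin N) ℝ) ^ 3)
          * pderiv j (vandermondePoly N) = 0 := by
      rw [← Finset.mul_sum, L_V, mul_zero]
    rw [h1, h2, add_zero]
  have h3 : ∀ i : Fin N, ∑ j : Fin N, pderiv i (pderiv j (vandermondeTilde N))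
      = pderiv i (∑ j : Fin N, pderiv j (vandermondeTilde N)) := fun i => (map_sum _ _ _).symm
  rw [Finset.sum_congr rfl fun i _ => h3 i]
  rw [Finset.sum_congr rfl fun i (_ : i ∈ Finset.univ) => by rw [h0]]
  have h4 : ∀ i : Fin N, pderiv i (C 3 * ((∑ k : Fin N, X k ^ 2) * vandermondePoly N))
      = C 6 * (X i * vandermondePoly N)
        + C 3 * ((∑ k : Fin N, X k ^ 2) * pderiv i (vandermondePoly N)) := by
    intro i
    rw [pderiv_C_mul, pderiv_mul, pd_p2]
    rw [show (C 2 : MvPolynomial (Fin N) ℝ) * X i * vandermondePoly N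
        + (∑ k : Fin N, X k ^ 2) * pderiv i (vandermondePoly N)
      = C 2 * (X i * vandermondePoly N)
        + (∑ k : Fin N, X k ^ 2) * pderiv i (vandermondePoly N) by ring]
    rw [mul_add, ← mul_assoc, ← C_mul]
    norm_num
  rw [Finset.sum_congr rfl fun i _ => h4 i]
  rw [Finset.sum_add_distrib]
  have h5 : ∑ i : Fin N, C 6 * (X i * vandermondePoly N)
      = (C 6 : MvPolynomial (Fin N) ℝ) * ((∑ k : Fin N, X k) * vandermondePoly N) := by
    rw [Finset.sum_mul, Finset.mul_sum]
  have h6 : ∑ i : Fin N, C 3 * ((∑ k : Fin N, X k ^ 2) * pderiv i (vandermondePoly N)) = 0 := by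
    rw [← Finset.mul_sum, ← Finset.mul_sum, L_V, mul_zero, mul_zero]
  rw [h5, h6, add_zero]

end VandAux

/-- For `n ≡ 2, 3 (mod 4)`, on the hyperplane `{∑ x_k = 0} ⊂ ℝ^{n+2}` the polynomial
`Ṽ = (∑ x_k³)·V` satisfies `Δ Ṽ(x) = Hess Ṽ(N,N)(x)`, where `N = (1,...,1)`
(so `Hess Ṽ(N,N) = ∑_{i,j} ∂_i ∂_j Ṽ`); in particular its restriction is harmonic
for the induced metric. -/
theorem stmt_6 (n : ℕ) (hn : 2 ≤ n) (hmod : n % 4 = 2 ∨ n % 4 = 3) :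
    ∀ x : Fin (n + 2) → ℝ, (∑ k, x k = 0) →
      eval x (∑ k : Fin (n + 2), pderiv k (pderiv k (vandermondeTilde (n + 2))))
        = eval x (∑ i : Fin (n + 2), ∑ j : Fin (n + 2),
            pderiv i (pderiv j (vandermondeTilde (n + 2)))) := by
  intro x hx
  rw [VandAux.sum_pd2_tilde, VandAux.sum_hess_tilde]
  have hs : eval x (∑ k : Fin (n + 2), (X k : MvPolynomial (Fin (n + 2)) ℝ)) = 0 := by
    rw [map_sum]
    simpa using hx
  simp only [eval_mul, eval_add, eval_C, hs]
  ring
end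

section
/- The critical points of f = (Σ_k x_k^m)|_{S^n ∩ V}, where m > 1 is odd and V = {Σ x_k = 0} ⊂ ℝ^{n+2}, are exactly the points x whose coordinates take (up to permutation) exactly two values a_k > 0 > b_k with k coordinates equal to a_k = √((n+2-k)/((n+2)k)) and n+2-k coordinates equal to b_k = -√(k/((n+2)(n+2-k))), together with their negatives; moreover the critical values t_k = k·a_k^m + (n+2-k)·b_k^m are strictly decreasing in k for 1 ≤ k ≤ ⌊(n+2)/2⌋. -/
/-- The positive coordinate value `a_k = √((n+2-k)/((n+2)k))`. -/
noncomputable def aVal (n k : ℕ) : ℝ :=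
  Real.sqrt (((n : ℝ) + 2 - k) / (((n : ℝ) + 2) * k))

/-- The negative coordinate value `b_k = -√(k/((n+2)(n+2-k)))`. -/
noncomputable def bVal (n k : ℕ) : ℝ :=
  - Real.sqrt ((k : ℝ) / (((n : ℝ) + 2) * ((n : ℝ) + 2 - k)))

/-- The critical value `t_k = k·a_k^m + (n+2-k)·b_k^m`. -/
noncomputable def tVal (n k m : ℕ) : ℝ :=
  (k : ℝ) * aVal n k ^ m + ((n : ℝ) + 2 - k) * bVal n k ^ m

/-- A strictly convex function (here `m t^{m-1}` with `m-1` even) minus an affine function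
has at most two roots. -/
lemma three_roots (m : ℕ) (hm : Odd m) (hm1 : 1 < m) (μ ν a b c : ℝ)
    (hab : a < b) (hbc : b < c)
    (ha : (m : ℝ) * a ^ (m - 1) - 2 * μ * a - ν = 0)
    (hb : (m : ℝ) * b ^ (m - 1) - 2 * μ * b - ν = 0)
    (hc : (m : ℝ) * c ^ (m - 1) - 2 * μ * c - ν = 0) : False := by
  have heven : Even (m - 1) := Nat.Odd.sub_odd hm odd_one
  have hne : m - 1 ≠ 0 := by omega
  have hconv := (heven.strictConvexOn_pow hne).2
  set θ : ℝ := (c - b) / (c - a) with hθdef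
  have hca : (0:ℝ) < c - a := by linarith
  have hθ0 : 0 < θ := div_pos (by linarith) hca
  have hθ1 : 0 < 1 - θ := by
    rw [hθdef]; rw [sub_pos, div_lt_one hca]; linarith
  have hsum : θ + (1 - θ) = 1 := by ring
  have hbdef : θ * a + (1 - θ) * c = b := by
    have hθm : θ * (c - a) = c - b := by rw [hθdef]; exact div_mul_cancel₀ _ hca.ne'
    linear_combination -hθm
  have key := hconv (Set.mem_univ a) (Set.mem_univ c) (by linarith : a ≠ c) hθ0 hθ1 hsum
  simp only [smul_eq_mul] at key
  rw [hbdef] at key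
  have hm0 : (0:ℝ) < m := by positivity
  have h1 := mul_lt_mul_of_pos_left key hm0
  have h2 : (m:ℝ) * (θ * a ^ (m-1) + (1-θ) * c ^ (m-1)) = (m:ℝ) * b ^ (m-1) := by
    linear_combination θ * ha + (1-θ) * hc - hb + 2 * μ * hbdef
  linarith

/-- If the coordinates take only two values, Lagrange multipliers exist. -/
lemma two_val_lagrange (m : ℕ) (a b : ℝ) (hab : a ≠ b) {N : ℕ} (x : Fin N → ℝ)
    (h : ∀ i, x i = a ∨ x i = b) :
    ∃ μ ν : ℝ, ∀ i, (m : ℝ) * x i ^ (m - 1) - 2 * μ * x i - ν = 0 := by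
  have hd : a - b ≠ 0 := sub_ne_zero.mpr hab
  refine ⟨(m : ℝ) * (a ^ (m-1) - b ^ (m-1)) / (2 * (a - b)),
    (m : ℝ) * a ^ (m-1) - 2 * ((m : ℝ) * (a ^ (m-1) - b ^ (m-1)) / (2 * (a - b))) * a,
    fun i => ?_⟩
  rcases h i with hi | hi <;> rw [hi] <;> field_simp <;> ring

private lemma sq_eq' (X Y : ℝ) (hX : 0 ≤ X) (hY : 0 ≤ Y) (h : X ^ 2 = Y ^ 2) : X = Y := by
  rw [← Real.sqrt_sq hX, ← Real.sqrt_sq hY, h]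

private lemma E1gen (p q s : ℝ) (hp : 0 < p) (hq : 0 < q) (hs : 0 < s) (r : ℕ) :
    q * ((s / (p * q)) ^ (r + 1) * Real.sqrt (s / (p * q))) =
      Real.sqrt (1 / (p ^ (2 * (r + 1) + 1) * (q * s) ^ (2 * r + 1))) * s ^ (2 * (r + 1)) := by
  have h1 : (0:ℝ) ≤ s / (p * q) := by positivity
  have h2 : (0:ℝ) ≤ 1 / (p ^ (2 * (r + 1) + 1) * (q * s) ^ (2 * r + 1)) := by positivity
  apply sq_eq' _ _ (by positivity) (by positivity)
  rw [mul_pow, mul_pow, mul_pow, Real.sq_sqrt h1, Real.sq_sqrt h2, ← pow_mul, ← pow_mul,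
    div_pow, mul_pow, one_div]
  have hp' : p ≠ 0 := ne_of_gt hp
  have hq' : q ≠ 0 := ne_of_gt hq
  have hs' : s ≠ 0 := ne_of_gt hs
  field_simp
  ring

/-- Closed form for the critical value `t_k`. -/
lemma tVal_eq (n k r : ℕ) (hk : 1 ≤ k) (hk2 : k ≤ n + 1) :
    tVal n k (2 * (r + 1) + 1) =
      Real.sqrt (1 / (((n:ℝ)+2) ^ (2*(r+1)+1) * ((k:ℝ) * ((n:ℝ)+2-k)) ^ (2*r+1))) *
        ((((n:ℝ)+2-k) ^ (2*(r+1))) - (k:ℝ) ^ (2*(r+1))) := by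
  have hK1 : (1:ℝ) ≤ (k:ℝ) := by exact_mod_cast hk
  have hcast : (k:ℝ) ≤ (n:ℝ) + 1 := by exact_mod_cast hk2
  have hK0 : (0:ℝ) < (k:ℝ) := by linarith
  have hNK0 : (0:ℝ) < (n:ℝ) + 2 - k := by linarith
  have hN0 : (0:ℝ) < (n:ℝ) + 2 := by linarith
  have hu0 : (0:ℝ) ≤ ((n:ℝ)+2-k) / (((n:ℝ)+2) * k) := by positivity
  have hv0 : (0:ℝ) ≤ (k:ℝ) / (((n:ℝ)+2) * ((n:ℝ)+2-k)) := by positivity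
  have hpow : ∀ t : ℝ, 0 ≤ t → Real.sqrt t ^ (2*(r+1)+1) = t ^ (r+1) * Real.sqrt t := by
    intro t ht
    rw [pow_succ, pow_mul, Real.sq_sqrt ht]
  have hodd : Odd (2*(r+1)+1) := ⟨r+1, by ring⟩
  have E1 := E1gen ((n:ℝ)+2) (k:ℝ) ((n:ℝ)+2-k) hN0 hK0 hNK0 r
  have E2 := E1gen ((n:ℝ)+2) ((n:ℝ)+2-k) (k:ℝ) hN0 hNK0 hK0 r
  rw [mul_comm ((n:ℝ)+2-k) (k:ℝ)] at E2
  rw [tVal, aVal, bVal, hodd.neg_pow, hpow _ hu0, hpow _ hv0]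
  linear_combination E1 - E2

/-- Strict monotonicity of the critical values. -/
lemma tVal_mono (n k r : ℕ) (hk : 1 ≤ k) (hk2 : k + 1 ≤ (n + 2) / 2) :
    tVal n (k + 1) (2 * (r + 1) + 1) < tVal n k (2 * (r + 1) + 1) := by
  have h2k : 2 * (k + 1) ≤ n + 2 := by omega
  have hkn : k ≤ n + 1 := by omega
  have hkn' : k + 1 ≤ n + 1 := by omega
  have e1 := tVal_eq n k r hk hkn
  have e2 := tVal_eq n (k + 1) r (by omega) hkn'
  push_cast at e2
  rw [e1, e2]
  set N : ℝ := (n:ℝ) + 2 with hN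
  set K : ℝ := (k:ℝ) with hK
  have hK1 : (1:ℝ) ≤ K := by rw [hK]; exact_mod_cast hk
  have h2K : 2 * (K + 1) ≤ N := by
    rw [hN, hK]; exact_mod_cast h2k
  have hN0 : (0:ℝ) < N := by linarith
  have hs1 : (0:ℝ) < K * (N - K) := by nlinarith
  have hs2 : (0:ℝ) < (K + 1) * (N - (K + 1)) := by nlinarith
  have hslt : K * (N - K) < (K + 1) * (N - (K + 1)) := by nlinarith
  have hwlt : 1 / (N ^ (2*(r+1)+1) * ((K+1) * (N - (K+1))) ^ (2*r+1)) <
      1 / (N ^ (2*(r+1)+1) * (K * (N - K)) ^ (2*r+1)) := by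
    apply one_div_lt_one_div_of_lt (by positivity)
    have := pow_lt_pow_left₀ hslt hs1.le (by omega : 2*r+1 ≠ 0)
    exact mul_lt_mul_of_pos_left this (by positivity)
  have hA2 : (0:ℝ) < Real.sqrt (1 / (N ^ (2*(r+1)+1) * ((K+1) * (N - (K+1))) ^ (2*r+1))) :=
    Real.sqrt_pos.mpr (by positivity)
  have hAlt := Real.sqrt_lt_sqrt (by positivity) hwlt
  have hD1 : (0:ℝ) < (N - K) ^ (2*(r+1)) - K ^ (2*(r+1)) := by
    have h1 : K < N - K := by linarith
    have := pow_lt_pow_left₀ h1 (by linarith : (0:ℝ) ≤ K) (by omega : 2*(r+1) ≠ 0)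
    linarith
  have hD21 : (N - (K+1)) ^ (2*(r+1)) - (K+1) ^ (2*(r+1)) ≤
      (N - K) ^ (2*(r+1)) - K ^ (2*(r+1)) := by
    have h1 := pow_le_pow_left₀ (by linarith : (0:ℝ) ≤ N - (K+1))
      (by linarith : N - (K+1) ≤ N - K) (2*(r+1))
    have h2 := pow_le_pow_left₀ (by linarith : (0:ℝ) ≤ K) (by linarith : K ≤ K + 1) (2*(r+1))
    linarith
  calc Real.sqrt (1 / (N ^ (2*(r+1)+1) * ((K+1) * (N - (K+1))) ^ (2*r+1))) *
        ((N - (K+1)) ^ (2*(r+1)) - (K+1) ^ (2*(r+1)))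
      ≤ Real.sqrt (1 / (N ^ (2*(r+1)+1) * ((K+1) * (N - (K+1))) ^ (2*r+1))) *
        ((N - K) ^ (2*(r+1)) - K ^ (2*(r+1))) := mul_le_mul_of_nonneg_left hD21 hA2.le
    _ < Real.sqrt (1 / (N ^ (2*(r+1)+1) * (K * (N - K)) ^ (2*r+1))) *
        ((N - K) ^ (2*(r+1)) - K ^ (2*(r+1))) := mul_lt_mul_of_pos_right hAlt hD1

/-- The forward direction: a critical point has two-valued coordinates with the
prescribed values. -/
lemma forward_dir (n m : ℕ) (hm : Odd m) (hm1 : 1 < m) (x : Fin (n + 2) → ℝ)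
    (hsum : ∑ i, x i = 0) (hsq : ∑ i, (x i) ^ 2 = 1) (μ ν : ℝ)
    (h : ∀ i, (m : ℝ) * x i ^ (m - 1) - 2 * μ * x i - ν = 0) :
    ∃ k : ℕ, 1 ≤ k ∧ k ≤ n + 1 ∧ (∀ i, x i = aVal n k ∨ x i = bVal n k) ∧
      {i | x i = aVal n k}.ncard = k := by
  classical
  obtain ⟨i0, -, hmax⟩ := Finset.exists_max_image Finset.univ x ⟨0, Finset.mem_univ 0⟩
  obtain ⟨j0, -, hmin⟩ := Finset.exists_min_image Finset.univ x ⟨0, Finset.mem_univ 0⟩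
  set a : ℝ := x i0 with hadef
  set b : ℝ := x j0 with hbdef
  have hba : b ≤ a := hmax j0 (Finset.mem_univ j0)
  have hlt : b < a := by
    rcases eq_or_lt_of_le hba with heq | hlt
    · exfalso
      have hall : ∀ i, x i = a := fun i =>
        le_antisymm (hmax i (Finset.mem_univ i)) (heq ▸ hmin i (Finset.mem_univ i))
      have h1 : ∑ i, x i = (n + 2 : ℝ) * a := by
        rw [Finset.sum_congr rfl fun i _ => hall i, Finset.sum_const, Finset.card_univ,
          Fintype.card_fin, nsmul_eq_mul]
        push_cast; ring
      have ha0 : a = 0 := by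
        rw [hsum] at h1; nlinarith [h1]
      have h2 : ∑ i, (x i) ^ 2 = 0 := by
        rw [Finset.sum_congr rfl fun i _ => by rw [hall i, ha0]]
        simp
      rw [hsq] at h2; norm_num at h2
    · exact hlt
  have htwo : ∀ i, x i = a ∨ x i = b := by
    intro i
    by_contra hcon
    push_neg at hcon
    have h1 : b < x i := lt_of_le_of_ne (hmin i (Finset.mem_univ i)) (Ne.symm hcon.2)
    have h2 : x i < a := lt_of_le_of_ne (hmax i (Finset.mem_univ i)) hcon.1
    exact three_roots m hm hm1 μ ν b (x i) a h1 h2 (h j0) (h i) (h i0)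
  set k : ℕ := (Finset.univ.filter (fun i => x i = a)).card with hkdef
  set k' : ℕ := (Finset.univ.filter (fun i => ¬ x i = a)).card with hk'def
  have hkk' : k + k' = n + 2 := by
    rw [hkdef, hk'def, Finset.card_filter_add_card_filter_not, Finset.card_univ,
      Fintype.card_fin]
  have hk1 : 1 ≤ k := by
    rw [hkdef]
    refine Finset.card_pos.mpr ⟨i0, ?_⟩
    simp [Finset.mem_filter, hadef]
  have hk'1 : 1 ≤ k' := by
    rw [hk'def]
    refine Finset.card_pos.mpr ⟨j0, ?_⟩
    simp only [Finset.mem_filter, Finset.mem_univ, true_and]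
    rw [← hbdef]; exact ne_of_lt hlt
  have hkn : k ≤ n + 1 := by omega
  have hbval : ∀ i, ¬ x i = a → x i = b := fun i hi => (htwo i).resolve_left hi
  have hs1 : (k:ℝ) * a + (k':ℝ) * b = 0 := by
    rw [← hsum, ← Finset.sum_filter_add_sum_filter_not Finset.univ (fun i => x i = a) x]
    congr 1
    · rw [Finset.sum_congr rfl fun i hi => (Finset.mem_filter.mp hi).2, Finset.sum_const,
        nsmul_eq_mul]
    · rw [Finset.sum_congr rfl fun i hi => hbval i (Finset.mem_filter.mp hi).2,
        Finset.sum_const, nsmul_eq_mul]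
  have hs2 : (k:ℝ) * a ^ 2 + (k':ℝ) * b ^ 2 = 1 := by
    rw [← hsq, ← Finset.sum_filter_add_sum_filter_not Finset.univ (fun i => x i = a)
      (fun i => (x i) ^ 2)]
    congr 1
    · rw [Finset.sum_congr rfl fun i hi => by rw [(Finset.mem_filter.mp hi).2],
        Finset.sum_const, nsmul_eq_mul]
    · rw [Finset.sum_congr rfl fun i hi => by rw [hbval i (Finset.mem_filter.mp hi).2],
        Finset.sum_const, nsmul_eq_mul]
  set K : ℝ := (k:ℝ) with hKdef
  set K' : ℝ := (k':ℝ) with hK'def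
  have hK1 : (1:ℝ) ≤ K := by rw [hKdef]; exact_mod_cast hk1
  have hK'1 : (1:ℝ) ≤ K' := by rw [hK'def]; exact_mod_cast hk'1
  have hKN : K + K' = (n:ℝ) + 2 := by
    rw [hKdef, hK'def]
    exact_mod_cast hkk'
  have ha0 : 0 < a := by nlinarith
  have hb0 : b < 0 := by nlinarith
  have hb' : K' * b = -(K * a) := by linarith
  have hsq' : (K' * b) ^ 2 = (K * a) ^ 2 := by rw [hb']; ring
  have keya : K * (K + K') * a ^ 2 = K' := by linear_combination K' * hs2 - hsq'
  have keyb : K' * (K + K') * b ^ 2 = K := by linear_combination K * hs2 + hsq'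
  have hK'eq : K' = (n:ℝ) + 2 - K := by linarith
  have hp1 : (0:ℝ) < (K + K') * K := mul_pos (by linarith) (by linarith)
  have hp2 : (0:ℝ) < (K + K') * K' := mul_pos (by linarith) (by linarith)
  have ha2 : a ^ 2 = ((n:ℝ) + 2 - K) / (((n:ℝ) + 2) * K) := by
    rw [← hK'eq, ← hKN, eq_div_iff hp1.ne']
    linear_combination keya
  have hb2 : b ^ 2 = K / (((n:ℝ) + 2) * ((n:ℝ) + 2 - K)) := by
    rw [← hK'eq, ← hKN, eq_div_iff hp2.ne']
    linear_combination keyb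
  have haval : a = aVal n k := by
    rw [aVal, ← hKdef, ← ha2, Real.sqrt_sq ha0.le]
  have hbval' : b = bVal n k := by
    rw [bVal, ← hKdef, ← hb2, Real.sqrt_sq_eq_abs, abs_of_neg hb0, neg_neg]
  refine ⟨k, hk1, hkn, fun i => by rw [← haval, ← hbval']; exact htwo i, ?_⟩
  have hset : {i | x i = aVal n k} = ↑(Finset.univ.filter (fun i => x i = a)) := by
    ext i
    simp [Finset.mem_filter, haval]
  rw [hset, Set.ncard_coe_finset]

/-- Classification of the critical points of `f = (∑ x_k^m)|_{Sⁿ ∩ V}` for odd `m > 1`,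
where `V = {∑ x_k = 0} ⊂ ℝ^{n+2}`: a point of `Sⁿ ∩ V` is critical (i.e. satisfies the
Lagrange-multiplier condition `m x_i^{m-1} - 2μ x_i - ν = 0` for all `i`) iff its coordinates
take exactly the two values `a_k > 0 > b_k` with multiplicities `k` and `n+2-k`, or the
negative of such a point; moreover the critical values `t_k` are strictly decreasing in `k`
for `1 ≤ k ≤ ⌊(n+2)/2⌋`. -/
theorem stmt_7 (n m : ℕ) (hm : Odd m) (hm1 : 1 < m) :
    (∀ x : Fin (n + 2) → ℝ, (∑ i, x i = 0) → (∑ i, (x i) ^ 2 = 1) →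
      ((∃ μ ν : ℝ, ∀ i, (m : ℝ) * x i ^ (m - 1) - 2 * μ * x i - ν = 0) ↔
        ∃ k : ℕ, 1 ≤ k ∧ k ≤ n + 1 ∧
          (((∀ i, x i = aVal n k ∨ x i = bVal n k) ∧ {i | x i = aVal n k}.ncard = k) ∨
            ((∀ i, -x i = aVal n k ∨ -x i = bVal n k) ∧ {i | -x i = aVal n k}.ncard = k)))) ∧
      (∀ k : ℕ, 1 ≤ k → k + 1 ≤ (n + 2) / 2 → tVal n (k + 1) m < tVal n k m) := by
  constructor
  · intro x hsum hsq
    constructor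
    · rintro ⟨μ, ν, h⟩
      obtain ⟨k, hk1, hkn, htwo, hcard⟩ := forward_dir n m hm hm1 x hsum hsq μ ν h
      exact ⟨k, hk1, hkn, Or.inl ⟨htwo, hcard⟩⟩
    · rintro ⟨k, hk1, hkn, hcase⟩
      have hK1 : (1:ℝ) ≤ (k:ℝ) := by exact_mod_cast hk1
      have hcast : (k:ℝ) ≤ (n:ℝ) + 1 := by exact_mod_cast hkn
      have hapos : 0 < aVal n k := Real.sqrt_pos.mpr (by
        apply div_pos <;> nlinarith)
      have hbneg : bVal n k ≤ 0 := neg_nonpos.mpr (Real.sqrt_nonneg _)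
      have hane : aVal n k ≠ bVal n k := by intro hc; rw [hc] at hapos; linarith
      rcases hcase with ⟨htwo, -⟩ | ⟨htwo, -⟩
      · exact two_val_lagrange m _ _ hane x htwo
      · have htwo' : ∀ i, x i = -aVal n k ∨ x i = -bVal n k := by
          intro i
          rcases htwo i with hh | hh
          · left; linarith
          · right; linarith
        exact two_val_lagrange m _ _ (fun hc => hane (neg_injective hc)) x htwo'
  · intro k hk1 hk2
    obtain ⟨j, hj⟩ := hm
    have hj1 : 1 ≤ j := by omega
    have hmeq : m = 2 * ((j - 1) + 1) + 1 := by omega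
    rw [hmeq]
    exact tVal_mono n k (j - 1) hk1 hk2
end

section
/- The function h(y) = y·((n+2-y)/y)^{m/2} - (n+2-y)·(y/(n+2-y))^{m/2} is strictly decreasing on the interval (0, n+2), for every odd integer m > 1 and every n ≥ 0. -/
/-- Key rewriting: for `0 < y` and `y < N`, `y * ((N-y)/y)^p = (N-y)^p / y^(p-1)`. -/
lemma stmt_8_rw (N y p : ℝ) (hy : 0 < y) (hyN : y < N) (hp : 0 < p) :
    y * ((N - y) / y) ^ p = (N - y) ^ p / y ^ (p - 1) := by
  have hNy : (0:ℝ) ≤ N - y := by linarith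
  rw [Real.div_rpow hNy hy.le]
  have : y ^ p = y ^ (p - 1) * y := by
    rw [← Real.rpow_add_one hy.ne' (p-1)]; ring_nf
  rw [this]
  have h1 : y ^ (p - 1) ≠ 0 := (Real.rpow_pos_of_pos hy _).ne'
  field_simp

/-- Monotonicity of `g(t) = (N-t)^p / t^(p-1)`. -/
lemma stmt_8_gdec (N a b p : ℝ) (ha : 0 < a) (hab : a < b) (hbN : b < N) (hp : 1 < p) :
    (N - b) ^ p / b ^ (p - 1) < (N - a) ^ p / a ^ (p - 1) := by
  have hq : 0 < p - 1 := by linarith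
  apply div_lt_div₀
  · exact Real.rpow_lt_rpow (by linarith) (by linarith) (by linarith)
  · exact (Real.rpow_le_rpow ha.le hab.le hq.le)
  · exact (Real.rpow_pos_of_pos (by linarith) p).le
  · exact Real.rpow_pos_of_pos ha _

/-- The function `h(y) = y·((n+2-y)/y)^{m/2} - (n+2-y)·(y/(n+2-y))^{m/2}` is strictly
decreasing on `(0, n+2)`, for every odd integer `m > 1` and every `n ≥ 0`. -/
theorem stmt_8 (n m : ℕ) (hm : Odd m) (hm1 : 1 < m) :
    StrictAntiOn
      (fun y : ℝ =>
        y * (((n : ℝ) + 2 - y) / y) ^ ((m : ℝ) / 2)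
          - ((n : ℝ) + 2 - y) * (y / ((n : ℝ) + 2 - y)) ^ ((m : ℝ) / 2))
      (Set.Ioo 0 ((n : ℝ) + 2)) := by
  set N : ℝ := (n : ℝ) + 2 with hN
  set p : ℝ := (m : ℝ) / 2 with hpdef
  have hm3 : 3 ≤ m := by
    rcases hm with ⟨k, rfl⟩; omega
  have hp : 1 < p := by
    have : (3:ℝ) ≤ (m:ℝ) := by exact_mod_cast hm3
    rw [hpdef]; linarith
  have hp0 : 0 < p := by linarith
  intro a ha b hb hab
  obtain ⟨ha0, haN⟩ := ha
  obtain ⟨hb0, hbN⟩ := hb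
  simp only
  rw [stmt_8_rw N a p ha0 haN hp0, stmt_8_rw N b p hb0 hbN hp0]
  have e1 : (N - a) * (a / (N - a)) ^ p = a ^ p / (N - a) ^ (p - 1) := by
    have := stmt_8_rw N (N - a) p (by linarith) (by linarith) hp0
    simpa using this
  have e2 : (N - b) * (b / (N - b)) ^ p = b ^ p / (N - b) ^ (p - 1) := by
    have := stmt_8_rw N (N - b) p (by linarith) (by linarith) hp0
    simpa using this
  rw [e1, e2]
  have g1 : (N - b) ^ p / b ^ (p - 1) < (N - a) ^ p / a ^ (p - 1) :=
    stmt_8_gdec N a b p ha0 hab hbN hp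
  have g2 : a ^ p / (N - a) ^ (p - 1) < b ^ p / (N - b) ^ (p - 1) := by
    have := stmt_8_gdec N (N - b) (N - a) p (by linarith) (by linarith) (by linarith) hp
    simpa using this
  linarith
end
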